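/- Let N ≥ 3 be an odd integer. Then I_N(R₁,R₂) ≍ (R₁R₂)^{(N²−1)/4} · log(R₁R₂) as R₁R₂ → ∞; that is, there exist constants C₁, C₂ > 0 and T > 1 such that for all R₁, R₂ > 0 with R₁R₂ ≥ T, one has C₁ ≤ I_N(R₁,R₂) / ((R₁R₂)^{(N²−1)/4} log(R₁R₂)) ≤ C₂. -/

import Mathlib

open MeasureTheory Real

/-- The volume integral `I_N(R₁,R₂)` over ordered tuples `R₁ > σ₁ > ⋯ > σ_N > 1/R₂`
of `∏ σ_l^{-N} ∏_{j<k} (σ_j² - σ_k²)`. -/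
noncomputable def volI (N : ℕ) (R₁ R₂ : ℝ) : ℝ :=
  ∫ σ in {σ : Fin N → ℝ | (∀ i, 1 / R₂ < σ i ∧ σ i < R₁) ∧
      ∀ i j : Fin N, i < j → σ j < σ i},
    (∏ l, ((σ l) ^ N)⁻¹) * ∏ j, ∏ k ∈ Finset.Ioi j, ((σ j) ^ 2 - (σ k) ^ 2)

open Set


lemma box_indicator {N : ℕ} (f : Fin N → ℝ → ℝ) (I : Fin N → Set ℝ) (σ : Fin N → ℝ) :
    (Set.pi Set.univ I).indicator (fun σ => ∏ j, f j (σ j)) σ = ∏ j, (I j).indicator (f j) (σ j) := by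
  by_cases h : σ ∈ Set.pi Set.univ I
  · rw [Set.indicator_of_mem h]
    exact Finset.prod_congr rfl fun j _ => (Set.indicator_of_mem (h j (Set.mem_univ j)) _).symm
  · rw [Set.indicator_of_notMem h]
    rw [Set.mem_univ_pi] at h
    push_neg at h
    obtain ⟨j, hj⟩ := h
    exact (Finset.prod_eq_zero (Finset.mem_univ j) (Set.indicator_of_notMem hj _)).symm

lemma integral_box {N : ℕ} (f : Fin N → ℝ → ℝ) (I : Fin N → Set ℝ)
    (hI : ∀ j, MeasurableSet (I j)) :
    ∫ σ in Set.pi Set.univ I, ∏ j, f j (σ j) = ∏ j, ∫ x in I j, f j x := by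
  rw [← integral_indicator (MeasurableSet.univ_pi hI)]
  simp_rw [box_indicator f I]
  rw [volume_pi, MeasureTheory.integral_fintype_prod_eq_prod (fun j => (I j).indicator (f j))]
  exact Finset.prod_congr rfl fun j _ => integral_indicator (hI j)

lemma integrableOn_box {N : ℕ} (f : Fin N → ℝ → ℝ) (I : Fin N → Set ℝ)
    (hI : ∀ j, MeasurableSet (I j)) (hf : ∀ j, IntegrableOn (f j) (I j)) :
    IntegrableOn (fun σ : Fin N → ℝ => ∏ j, f j (σ j)) (Set.pi Set.univ I) := by
  have : (Set.pi Set.univ I).indicator (fun σ : Fin N → ℝ => ∏ j, f j (σ j))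
      = fun σ => ∏ j, (I j).indicator (f j) (σ j) := funext (box_indicator f I)
  refine (integrable_indicator_iff (MeasurableSet.univ_pi hI)).1 ?_
  rw [this]
  exact Integrable.fintype_prod fun j => (integrable_indicator_iff (hI j)).2 (hf j)

lemma prod_zpow_sum {α : Type*} (b : ℝ) (hb : b ≠ 0) (s : Finset α) (f : α → ℤ) :
    ∏ i ∈ s, b ^ f i = b ^ (∑ i ∈ s, f i) := by
  induction s using Finset.cons_induction with
  | empty => simp
  | cons a s ha ih => rw [Finset.prod_cons, Finset.sum_cons, ih, zpow_add₀ hb]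

-- integrability of zpow on Ioo away from 0
lemma integrableOn_zpow_Ioo (e : ℤ) {a b : ℝ} (ha : 0 < a) :
    IntegrableOn (fun x : ℝ => x ^ e) (Set.Ioo a b) := by
  rcases le_or_gt b a with h | h
  · rw [Set.Ioo_eq_empty (by exact fun hh => absurd hh (not_lt.2 h))]
    exact integrableOn_empty
  · have hc : ContinuousOn (fun x : ℝ => x ^ e) (Set.Icc a b) := fun x hx =>
      (continuousAt_zpow₀ x e (Or.inl (ne_of_gt (lt_of_lt_of_le ha hx.1)))).continuousWithinAt
    exact (hc.integrableOn_compact isCompact_Icc).mono_set Set.Ioo_subset_Icc_self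

-- base monotonicity of zpow
lemma zpow_base_le {x y : ℝ} (e : ℤ) (hx : 0 < x) (hxy : x ≤ y) (he : 0 ≤ e) :
    x ^ e ≤ y ^ e := by
  lift e to ℕ using he
  rw [zpow_natCast, zpow_natCast]
  exact pow_le_pow_left₀ hx.le hxy e

lemma zpow_base_le_neg {x y : ℝ} (e : ℤ) (hx : 0 < x) (hxy : x ≤ y) (he : e ≤ 0) :
    y ^ e ≤ x ^ e := by
  have hy : 0 < y := lt_of_lt_of_le hx hxy
  have h := inv_anti₀ (zpow_pos hx (-e)) (zpow_base_le (-e) hx hxy (by omega))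
  rw [← zpow_neg, ← zpow_neg, neg_neg] at h
  exact h

-- lower bound for set integral by constant
lemma setIntegral_Ioo_ge (f : ℝ → ℝ) {a b c : ℝ} (hab : a ≤ b)
    (hf : IntegrableOn f (Set.Ioo a b)) (hc : ∀ x ∈ Set.Ioo a b, c ≤ f x) :
    (b - a) * c ≤ ∫ x in Set.Ioo a b, f x := by
  have h1 : ∫ _x in Set.Ioo a b, c = (b - a) * c := by
    rw [setIntegral_const, measureReal_def, Real.volume_Ioo, smul_eq_mul,
      ENNReal.toReal_ofReal (sub_nonneg.2 hab)]
  rw [← h1]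
  exact setIntegral_mono_on (integrableOn_const (by rw [Real.volume_Ioo]; exact ENNReal.ofReal_ne_top)) hf measurableSet_Ioo fun x hx => hc x hx

lemma setIntegral_Ioo_le (f : ℝ → ℝ) {a b c : ℝ} (hab : a ≤ b)
    (hf : IntegrableOn f (Set.Ioo a b)) (hc : ∀ x ∈ Set.Ioo a b, f x ≤ c) :
    ∫ x in Set.Ioo a b, f x ≤ (b - a) * c := by
  have h1 : ∫ _x in Set.Ioo a b, c = (b - a) * c := by
    rw [setIntegral_const, measureReal_def, Real.volume_Ioo, smul_eq_mul,
      ENNReal.toReal_ofReal (sub_nonneg.2 hab)]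
  rw [← h1]
  exact setIntegral_mono_on hf (integrableOn_const (by rw [Real.volume_Ioo]; exact ENNReal.ofReal_ne_top)) measurableSet_Ioo fun x hx => hc x hx

-- exact: inverse
lemma integral_Ioo_inv {a b : ℝ} (ha : 0 < a) (hab : a ≤ b) :
    ∫ x in Set.Ioo a b, x ^ (-1 : ℤ) = Real.log (b / a) := by
  have : ∀ x : ℝ, x ^ (-1 : ℤ) = x⁻¹ := fun x => zpow_neg_one x
  simp_rw [this]
  rw [← integral_Ioc_eq_integral_Ioo, ← intervalIntegral.integral_of_le hab]
  exact integral_inv_of_pos ha (lt_of_lt_of_le ha hab)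

-- upper bound for very negative exponents
lemma integral_Ioo_zpow_le {a b : ℝ} (e : ℤ) (ha : 0 < a) (hab : a ≤ b) (he : e ≤ -2) :
    ∫ x in Set.Ioo a b, x ^ e ≤ a ^ (e + 1) := by
  have hb : 0 < b := lt_of_lt_of_le ha hab
  have h0 : (0:ℝ) ∉ Set.uIcc a b := by
    rw [Set.uIcc_of_le hab]
    exact fun h => absurd h.1 (not_le.2 ha)
  have hval : ∫ x in Set.Ioo a b, x ^ e = (b ^ (e + 1) - a ^ (e + 1)) / (e + 1) := by
    rw [← integral_Ioc_eq_integral_Ioo, ← intervalIntegral.integral_of_le hab]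
    exact integral_zpow (Or.inr ⟨by omega, h0⟩)
  rw [hval]
  have hden : (1:ℝ) ≤ -((e:ℝ) + 1) := by
    have : (e : ℝ) ≤ -2 := by exact_mod_cast he
    linarith
  have hnum : (0:ℝ) ≤ a ^ (e + 1) - b ^ (e + 1) :=
    sub_nonneg.2 (zpow_base_le_neg (e + 1) ha hab (by omega))
  have heq : (b ^ (e + 1) - a ^ (e + 1)) / ((e : ℝ) + 1)
      = (a ^ (e + 1) - b ^ (e + 1)) / (-((e:ℝ) + 1)) := by
    rw [div_neg, ← neg_div, neg_sub]
  rw [heq]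
  calc (a ^ (e + 1) - b ^ (e + 1)) / (-((e:ℝ) + 1)) ≤ a ^ (e + 1) - b ^ (e + 1) :=
        div_le_self hnum hden
    _ ≤ a ^ (e + 1) := by
        have := zpow_pos (lt_of_lt_of_le ha hab) (e + 1)
        linarith

lemma factor_eq {x : ℝ} (hx : x ≠ 0) {N j : ℕ} (hj : j < N) :
    (x ^ N)⁻¹ * (x ^ 2) ^ (N - 1 - j) = x ^ ((N:ℤ) - 2*(j:ℤ) - 2) := by
  rw [← pow_mul, ← zpow_natCast x N, ← zpow_neg, ← zpow_natCast x (2 * (N - 1 - j)),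
    ← zpow_add₀ hx]
  congr 1
  have h1 : (((2 * (N - 1 - j) : ℕ)) : ℤ) = 2 * ((N:ℤ) - 1 - j) := by
    push_cast [Nat.cast_sub (by omega : j ≤ N - 1), Nat.cast_sub (by omega : 1 ≤ N)]
    ring
  rw [h1]; ring

section pointwise
variable {N : ℕ}

lemma F_nonneg_le (σ : Fin N → ℝ) (hpos : ∀ i, 0 < σ i)
    (hord : ∀ i j : Fin N, i < j → σ j < σ i) :
    0 ≤ (∏ l, ((σ l) ^ N)⁻¹) * ∏ j, ∏ k ∈ Finset.Ioi j, ((σ j) ^ 2 - (σ k) ^ 2) ∧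
    (∏ l, ((σ l) ^ N)⁻¹) * ∏ j, ∏ k ∈ Finset.Ioi j, ((σ j) ^ 2 - (σ k) ^ 2)
      ≤ ∏ j : Fin N, (σ j) ^ ((N:ℤ) - 2*(j:ℤ) - 2) := by
  have hd : ∀ j : Fin N, ∀ k ∈ Finset.Ioi j, 0 ≤ (σ j) ^ 2 - (σ k) ^ 2 := by
    intro j k hk
    rw [Finset.mem_Ioi] at hk
    have := hord j k hk
    nlinarith [hpos k, hpos j]
  have key : (∏ l, ((σ l) ^ N)⁻¹) * ∏ j, ∏ k ∈ Finset.Ioi j, ((σ j) ^ 2 - (σ k) ^ 2)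
      = ∏ j, (((σ j) ^ N)⁻¹ * ∏ k ∈ Finset.Ioi j, ((σ j) ^ 2 - (σ k) ^ 2)) := by
    rw [Finset.prod_mul_distrib]
  constructor
  · rw [key]
    exact Finset.prod_nonneg fun j _ => mul_nonneg (inv_nonneg.2 (pow_nonneg (hpos j).le N))
      (Finset.prod_nonneg (hd j))
  · rw [key]
    apply Finset.prod_le_prod
    · intro j _
      exact mul_nonneg (inv_nonneg.2 (pow_nonneg (hpos j).le N)) (Finset.prod_nonneg (hd j))
    · intro j _
      have h2 : ∏ k ∈ Finset.Ioi j, ((σ j) ^ 2 - (σ k) ^ 2)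
          ≤ ∏ _k ∈ Finset.Ioi j, (σ j) ^ 2 := by
        apply Finset.prod_le_prod (hd j)
        intro k _
        nlinarith [hpos k]
      have h3 : (((σ j) ^ N)⁻¹ : ℝ) * ∏ _k ∈ Finset.Ioi j, (σ j) ^ 2
          = (σ j) ^ ((N:ℤ) - 2*((j:ℕ):ℤ) - 2) := by
        rw [Finset.prod_const, Fin.card_Ioi]
        exact factor_eq (hpos j).ne' j.isLt
      calc (((σ j) ^ N)⁻¹ : ℝ) * ∏ k ∈ Finset.Ioi j, ((σ j) ^ 2 - (σ k) ^ 2)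
          ≤ ((σ j) ^ N)⁻¹ * ∏ _k ∈ Finset.Ioi j, (σ j) ^ 2 := by
            apply mul_le_mul_of_nonneg_left h2 (inv_nonneg.2 (pow_nonneg (hpos j).le N))
        _ = (σ j) ^ ((N:ℤ) - 2*((j:ℕ):ℤ) - 2) := h3

lemma F_ge (σ : Fin N → ℝ) (hpos : ∀ i, 0 < σ i)
    (hgap : ∀ i j : Fin N, i < j → 2 * σ j ≤ σ i) :
    ∏ j : Fin N, ((3/4 : ℝ) ^ (N - 1 - (j:ℕ)) * (σ j) ^ ((N:ℤ) - 2*(j:ℤ) - 2))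
      ≤ (∏ l, ((σ l) ^ N)⁻¹) * ∏ j, ∏ k ∈ Finset.Ioi j, ((σ j) ^ 2 - (σ k) ^ 2) := by
  have key : (∏ l, ((σ l) ^ N)⁻¹) * ∏ j, ∏ k ∈ Finset.Ioi j, ((σ j) ^ 2 - (σ k) ^ 2)
      = ∏ j, (((σ j) ^ N)⁻¹ * ∏ k ∈ Finset.Ioi j, ((σ j) ^ 2 - (σ k) ^ 2)) := by
    rw [Finset.prod_mul_distrib]
  rw [key]
  apply Finset.prod_le_prod
  · intro j _
    exact mul_nonneg (pow_nonneg (by norm_num) _) (zpow_pos (hpos j) _).le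
  · intro j _
    have h2 : ∏ _k ∈ Finset.Ioi j, ((3/4 : ℝ) * (σ j) ^ 2)
        ≤ ∏ k ∈ Finset.Ioi j, ((σ j) ^ 2 - (σ k) ^ 2) := by
      apply Finset.prod_le_prod
      · intro k _
        positivity
      · intro k hk
        rw [Finset.mem_Ioi] at hk
        have := hgap j k hk
        nlinarith [hpos k]
    have h3 : (((σ j) ^ N)⁻¹ : ℝ) * ∏ _k ∈ Finset.Ioi j, ((3/4 : ℝ) * (σ j) ^ 2)
        = (3/4 : ℝ) ^ (N - 1 - (j:ℕ)) * (σ j) ^ ((N:ℤ) - 2*((j:ℕ):ℤ) - 2) := by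
      rw [Finset.prod_const, Fin.card_Ioi, mul_pow, ← mul_assoc,
        mul_comm (((σ j) ^ N)⁻¹) ((3/4 : ℝ) ^ (N - 1 - (j:ℕ))), mul_assoc,
        factor_eq (hpos j).ne' j.isLt]
    calc (3/4 : ℝ) ^ (N - 1 - (j:ℕ)) * (σ j) ^ ((N:ℤ) - 2*((j:ℕ):ℤ) - 2)
        = ((σ j) ^ N)⁻¹ * ∏ _k ∈ Finset.Ioi j, ((3/4 : ℝ) * (σ j) ^ 2) := h3.symm
      _ ≤ ((σ j) ^ N)⁻¹ * ∏ k ∈ Finset.Ioi j, ((σ j) ^ 2 - (σ k) ^ 2) :=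
          mul_le_mul_of_nonneg_left h2 (inv_nonneg.2 (pow_nonneg (hpos j).le N))

end pointwise

lemma sumA (n : ℕ) : ∑ j ∈ Finset.range n, (2*(n:ℤ) - 2*(j:ℤ)) = n^2 + n := by
  induction n with
  | zero => simp
  | succ m ih =>
    have h : ∀ j : ℕ, 2*((m+1:ℕ):ℤ) - 2*(j:ℤ) = (2*(m:ℤ) - 2*(j:ℤ)) + 2 := by
      intro j; push_cast; ring
    calc ∑ j ∈ Finset.range (m+1), (2*((m+1:ℕ):ℤ) - 2*(j:ℤ))
        = ∑ j ∈ Finset.range (m+1), ((2*(m:ℤ) - 2*(j:ℤ)) + 2) :=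
          Finset.sum_congr rfl fun j _ => h j
      _ = (∑ j ∈ Finset.range m, (2*(m:ℤ) - 2*(j:ℤ))) + (2*(m:ℤ) - 2*(m:ℤ) + 2)
          + 2*(m:ℤ) := by
          rw [Finset.sum_add_distrib, Finset.sum_range_succ, Finset.sum_const,
            Finset.card_range]
          push_cast; ring
      _ = ((m+1:ℕ):ℤ)^2 + ((m+1:ℕ):ℤ) := by rw [ih]; push_cast; ring

lemma sumC (n : ℕ) : ∑ i ∈ Finset.range n, (2*(i:ℤ) + 2) = n^2 + n := by
  induction n with
  | zero => simp
  | succ m ih =>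
    rw [Finset.sum_range_succ, ih]
    push_cast; ring

lemma measS {N : ℕ} (a b : ℝ) : MeasurableSet {σ : Fin N → ℝ |
    (∀ i, a < σ i ∧ σ i < b) ∧ ∀ i j : Fin N, i < j → σ j < σ i} := by
  have heq : {σ : Fin N → ℝ | (∀ i, a < σ i ∧ σ i < b) ∧ ∀ i j : Fin N, i < j → σ j < σ i}
      = (⋂ i, ({σ : Fin N → ℝ | a < σ i} ∩ {σ : Fin N → ℝ | σ i < b})) ∩
        ⋂ i, ⋂ j, ⋂ (_h : i < j), {σ : Fin N → ℝ | σ j < σ i} := by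
    ext σ
    simp only [Set.mem_setOf_eq, Set.mem_inter_iff, Set.mem_iInter]
  rw [heq]
  apply MeasurableSet.inter
  · exact MeasurableSet.iInter fun i =>
      (measurableSet_lt measurable_const (measurable_pi_apply i)).inter
      (measurableSet_lt (measurable_pi_apply i) measurable_const)
  · exact MeasurableSet.iInter fun i => MeasurableSet.iInter fun j =>
      MeasurableSet.iInter fun _ =>
        measurableSet_lt (measurable_pi_apply j) (measurable_pi_apply i)

lemma chain {N : ℕ} (l u : ℕ → ℝ) (hu0 : ∀ j, j < N → 0 < u j)
    (hlu : ∀ j, j < N → l j ≤ u j) (hadj : ∀ j, j + 1 < N → 2 * u (j+1) ≤ l j) :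
    ∀ j k, j < k → k < N → 2 * u k ≤ l j := by
  intro j k hjk
  induction k with
  | zero => omega
  | succ m ih =>
    intro hmN
    rcases Nat.lt_or_ge j m with hjm | hjm
    · have h1 := ih hjm (by omega)
      have h2 := hadj m hmN
      have h3 := hlu m (by omega)
      have h4 := hu0 m (by omega)
      linarith
    · have : j = m := by omega
      subst this
      exact hadj j hmN

noncomputable def lo (n : ℕ) (R₁ R₂ : ℝ) (j : ℕ) : ℝ :=
  if j < n then R₁ / 8^(j+1) else if j = n then 4 * 8^n / R₂ else 8^(2*n+1-j) / R₂

noncomputable def hi (n : ℕ) (R₁ R₂ : ℝ) (j : ℕ) : ℝ :=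
  if j < n then 2 * (R₁ / 8^(j+1)) else if j = n then R₁ / (2 * 8^n)
    else 2 * (8^(2*n+1-j) / R₂)

variable {n : ℕ} {R₁ R₂ : ℝ}

lemma pow8_pos (k : ℕ) : (0:ℝ) < 8^k := by positivity

lemma pow8_mono {a b : ℕ} (h : a ≤ b) : (8:ℝ)^a ≤ 8^b :=
  pow_le_pow_right₀ (by norm_num) h

lemma lo_pos (hR₁ : 0 < R₁) (hR₂ : 0 < R₂) (j : ℕ) : 0 < lo n R₁ R₂ j := by
  unfold lo; split_ifs <;> positivity

lemma hi_pos (hR₁ : 0 < R₁) (hR₂ : 0 < R₂) (j : ℕ) : 0 < hi n R₁ R₂ j := by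
  unfold hi; split_ifs <;> positivity

lemma lo_le_hi (hn1 : 1 ≤ n) (hR₁ : 0 < R₁) (hR₂ : 0 < R₂)
    (hT : (8:ℝ)^(2*(2*n+1)) ≤ R₁ * R₂) (j : ℕ) :
    lo n R₁ R₂ j ≤ hi n R₁ R₂ j := by
  unfold lo hi
  split_ifs with h1 h2
  · have : (0:ℝ) < R₁ / 8^(j+1) := by positivity
    linarith
  · rw [div_le_div_iff₀ hR₂ (by positivity)]
    calc 4 * (8:ℝ)^n * (2 * 8^n) = 8^(n+n+1) := by
          rw [pow_add, pow_add, pow_one]; ring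
      _ ≤ 8^(2*(2*n+1)) := pow8_mono (by omega)
      _ ≤ R₁ * R₂ := hT
  · have : (0:ℝ) < 8^(2*n+1-j) / R₂ := by positivity
    linarith

lemma lo_adj (hn1 : 1 ≤ n) (hR₁ : 0 < R₁) (hR₂ : 0 < R₂) {j : ℕ}
    (hj : j + 1 < 2*n+1) : 2 * hi n R₁ R₂ (j+1) ≤ lo n R₁ R₂ j := by
  unfold lo hi
  rcases lt_trichotomy (j+1) n with h | h | h
  · rw [if_pos h, if_pos (by omega)]
    rw [pow_succ, ← div_div]
    have hX : (0:ℝ) ≤ R₁ / 8^(j+1) := by positivity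
    linarith
  · rw [if_pos (show j < n by omega), if_neg (by omega), if_pos h, ← h]
    have h8 : (0:ℝ) < 8^(j+1) := by positivity
    rw [show (2:ℝ) * (R₁ / (2 * 8^(j+1))) = R₁ / 8^(j+1) by field_simp]
  · rw [if_neg (by omega), if_neg (by omega)]
    rcases eq_or_lt_of_le (show n ≤ j by omega) with h' | h'
    · rw [if_neg (by omega), if_pos h'.symm]
      rw [show 2*n+1-(j+1) = n by omega]
      rw [show (2:ℝ) * (2 * (8^n / R₂)) = 4 * 8^n / R₂ by ring]
    · rw [if_neg (by omega), if_neg (by omega)]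
      rw [show 2*n+1-j = (2*n+1-(j+1)) + 1 by omega, pow_succ]
      have hY : (0:ℝ) ≤ 8^(2*n+1-(j+1)) / R₂ := by positivity
      rw [show ((8:ℝ)^(2*n+1-(j+1)) * 8) / R₂ = 8 * (8^(2*n+1-(j+1)) / R₂) by ring]
      linarith

lemma lo_ge (hn1 : 1 ≤ n) (hR₁ : 0 < R₁) (hR₂ : 0 < R₂)
    (hT : (8:ℝ)^(2*(2*n+1)) ≤ R₁ * R₂) {j : ℕ} (hj : j < 2*n+1) :
    1 / R₂ ≤ lo n R₁ R₂ j := by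
  unfold lo
  split_ifs with h1 h2
  · rw [div_le_div_iff₀ hR₂ (by positivity)]
    calc (1:ℝ) * 8^(j+1) = 8^(j+1) := by ring
      _ ≤ 8^(2*(2*n+1)) := pow8_mono (by omega)
      _ ≤ R₁ * R₂ := hT
  · rw [div_le_div_iff₀ hR₂ hR₂]
    have h : (1:ℝ) ≤ 8^n := one_le_pow₀ (by norm_num)
    nlinarith
  · rw [div_le_div_iff₀ hR₂ hR₂]
    have : (1:ℝ) ≤ 8^(2*n+1-j) := one_le_pow₀ (by norm_num)
    nlinarith

lemma hi_le (hn1 : 1 ≤ n) (hR₁ : 0 < R₁) (hR₂ : 0 < R₂)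
    (hT : (8:ℝ)^(2*(2*n+1)) ≤ R₁ * R₂) {j : ℕ} (hj : j < 2*n+1) :
    hi n R₁ R₂ j ≤ R₁ := by
  unfold hi
  split_ifs with h1 h2
  · rw [show (2:ℝ) * (R₁ / 8^(j+1)) = 2 * R₁ / 8^(j+1) by ring, div_le_iff₀ (by positivity)]
    have : (8:ℝ) ≤ 8^(j+1) := by
      calc (8:ℝ) = 8^1 := (pow_one 8).symm
        _ ≤ 8^(j+1) := pow8_mono (by omega)
    nlinarith
  · apply div_le_self hR₁.le
    have : (1:ℝ) ≤ 8^n := one_le_pow₀ (by norm_num)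
    linarith
  · rw [show (2:ℝ) * (8^(2*n+1-j) / R₂) = (2 * 8^(2*n+1-j)) / R₂ by ring,
      div_le_iff₀ hR₂]
    calc (2:ℝ) * 8^(2*n+1-j) ≤ 8^((2*n+1-j)+1) := by
          rw [pow_succ]; nlinarith [pow8_pos (2*n+1-j)]
      _ ≤ 8^(2*(2*n+1)) := pow8_mono (by omega)
      _ ≤ R₁ * R₂ := hT

def eI (n j : ℕ) : ℤ := 2*(n:ℤ) - 2*(j:ℤ) - 1



section core
variable {n : ℕ} {R₁ R₂ : ℝ}

lemma hexp (n : ℕ) (j : ℕ) : ((2*n+1 : ℕ):ℤ) - 2*(j:ℤ) - 2 = eI n j := by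
  unfold eI; push_cast; ring

lemma measF (n : ℕ) : Measurable (fun σ : Fin (2*n+1) → ℝ =>
    (∏ l, ((σ l) ^ (2*n+1))⁻¹) * ∏ j, ∏ k ∈ Finset.Ioi j, ((σ j) ^ 2 - (σ k) ^ 2)) := by
  apply Measurable.mul
  · exact Finset.measurable_prod _ fun l _ => ((measurable_pi_apply l).pow_const (2*n+1)).inv
  · exact Finset.measurable_prod _ fun j _ => Finset.measurable_prod _ fun k _ =>
      ((measurable_pi_apply j).pow_const 2).sub ((measurable_pi_apply k).pow_const 2)

lemma GintB (n : ℕ) (hR₂ : 0 < R₂) :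
    IntegrableOn (fun σ : Fin (2*n+1) → ℝ =>
      ∏ j : Fin (2*n+1), (σ j) ^ (((2*n+1 : ℕ):ℤ) - 2*(j:ℤ) - 2))
      (Set.pi Set.univ fun _ : Fin (2*n+1) => Set.Ioo (1/R₂) R₁) := by
  exact integrableOn_box (fun j x => x ^ (((2*n+1 : ℕ):ℤ) - 2*((j:ℕ):ℤ) - 2))
    (fun _ => Set.Ioo (1/R₂) R₁) (fun _ => measurableSet_Ioo)
    (fun j => integrableOn_zpow_Ioo _ (by positivity))

lemma fintS (n : ℕ) (hR₁ : 0 < R₁) (hR₂ : 0 < R₂) (hT1 : 1 < R₁ * R₂) :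
    IntegrableOn (fun σ : Fin (2*n+1) → ℝ =>
      (∏ l, ((σ l) ^ (2*n+1))⁻¹) * ∏ j, ∏ k ∈ Finset.Ioi j, ((σ j) ^ 2 - (σ k) ^ 2))
      {σ : Fin (2*n+1) → ℝ | (∀ i, 1 / R₂ < σ i ∧ σ i < R₁) ∧
        ∀ i j : Fin (2*n+1), i < j → σ j < σ i} := by
  have ha : (0:ℝ) < 1/R₂ := by positivity
  have hSB : {σ : Fin (2*n+1) → ℝ | (∀ i, 1 / R₂ < σ i ∧ σ i < R₁) ∧
        ∀ i j : Fin (2*n+1), i < j → σ j < σ i}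
      ⊆ Set.pi Set.univ (fun _ : Fin (2*n+1) => Set.Ioo (1/R₂) R₁) := by
    intro σ hσ
    rw [Set.mem_univ_pi]
    exact fun j => ⟨(hσ.1 j).1, (hσ.1 j).2⟩
  refine Integrable.mono ((GintB n hR₂).mono_set hSB)
    (measF n).aestronglyMeasurable ?_
  rw [ae_restrict_iff' (measS (1/R₂) R₁)]
  refine Filter.Eventually.of_forall fun σ hσ => ?_
  have hpos : ∀ i, 0 < σ i := fun i => lt_trans ha (hσ.1 i).1
  obtain ⟨h0, hle⟩ := F_nonneg_le σ hpos hσ.2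
  have hG0 : 0 ≤ ∏ j : Fin (2*n+1), (σ j) ^ (((2*n+1 : ℕ):ℤ) - 2*(j:ℤ) - 2) :=
    Finset.prod_nonneg fun j _ => (zpow_pos (hpos j) _).le
  rw [Real.norm_of_nonneg h0, Real.norm_of_nonneg hG0]
  exact hle

lemma sumEA (n : ℕ) : ∑ j ∈ Finset.range n, (eI n j + 1) = ((n^2 + n : ℕ) : ℤ) := by
  have h := sumA n
  calc ∑ j ∈ Finset.range n, (eI n j + 1) = ∑ j ∈ Finset.range n, (2*(n:ℤ) - 2*(j:ℤ)) :=
        Finset.sum_congr rfl fun j _ => by unfold eI; ring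
    _ = ((n^2 + n : ℕ) : ℤ) := by rw [h]; push_cast; ring

lemma sumEC (n : ℕ) : ∑ i ∈ Finset.range n, (-(eI n (n+1+i) + 1)) = ((n^2 + n : ℕ) : ℤ) := by
  have h := sumC n
  calc ∑ i ∈ Finset.range n, (-(eI n (n+1+i) + 1))
      = ∑ i ∈ Finset.range n, (2*(i:ℤ) + 2) :=
        Finset.sum_congr rfl fun i _ => by unfold eI; push_cast; ring
    _ = ((n^2 + n : ℕ) : ℤ) := by rw [h]; push_cast; ring

lemma prod_split (N n : ℕ) (hNn : N = n + 1 + n) (g : ℕ → ℝ) :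
    ∏ j ∈ Finset.range N, g j =
      (∏ j ∈ Finset.range n, g j) * g n * (∏ i ∈ Finset.range n, g (n+1+i)) := by
  subst hNn
  rw [show n + 1 + n = (n+1) + n from rfl, Finset.prod_range_add, Finset.prod_range_succ]

lemma upper (hn1 : 1 ≤ n) (hR₁ : 0 < R₁) (hR₂ : 0 < R₂)
    (hT : (8:ℝ)^(2*(2*n+1)) ≤ R₁ * R₂) :
    volI (2*n+1) R₁ R₂ ≤ (R₁*R₂)^(n^2+n) * Real.log (R₁*R₂) := by
  have hT1 : (1:ℝ) < R₁ * R₂ :=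
    lt_of_lt_of_le (one_lt_pow₀ (by norm_num) (by omega)) hT
  have ha : (0:ℝ) < 1/R₂ := by positivity
  have haR : 1/R₂ < R₁ := by rw [div_lt_iff₀ hR₂]; linarith
  have hSB : {σ : Fin (2*n+1) → ℝ | (∀ i, 1 / R₂ < σ i ∧ σ i < R₁) ∧
        ∀ i j : Fin (2*n+1), i < j → σ j < σ i}
      ⊆ Set.pi Set.univ (fun _ : Fin (2*n+1) => Set.Ioo (1/R₂) R₁) := by
    intro σ hσ
    rw [Set.mem_univ_pi]
    exact fun j => ⟨(hσ.1 j).1, (hσ.1 j).2⟩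
  have step1 : volI (2*n+1) R₁ R₂ ≤
      ∫ σ in {σ : Fin (2*n+1) → ℝ | (∀ i, 1 / R₂ < σ i ∧ σ i < R₁) ∧
        ∀ i j : Fin (2*n+1), i < j → σ j < σ i},
        ∏ j : Fin (2*n+1), (σ j) ^ (((2*n+1 : ℕ):ℤ) - 2*(j:ℤ) - 2) := by
    refine setIntegral_mono_on (fintS n hR₁ hR₂ hT1)
      ((GintB n hR₂).mono_set hSB) (measS (1/R₂) R₁) fun σ hσ => ?_
    exact (F_nonneg_le σ (fun i => lt_trans ha (hσ.1 i).1) hσ.2).2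
  have step2 : ∫ σ in {σ : Fin (2*n+1) → ℝ | (∀ i, 1 / R₂ < σ i ∧ σ i < R₁) ∧
        ∀ i j : Fin (2*n+1), i < j → σ j < σ i},
        ∏ j : Fin (2*n+1), (σ j) ^ (((2*n+1 : ℕ):ℤ) - 2*(j:ℤ) - 2)
      ≤ ∫ σ in Set.pi Set.univ (fun _ : Fin (2*n+1) => Set.Ioo (1/R₂) R₁),
        ∏ j : Fin (2*n+1), (σ j) ^ (((2*n+1 : ℕ):ℤ) - 2*(j:ℤ) - 2) := by
    refine setIntegral_mono_set (GintB n hR₂) ?_ (HasSubset.Subset.eventuallyLE hSB)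
    refine (ae_restrict_iff' (MeasurableSet.univ_pi fun _ => measurableSet_Ioo)).2
      (Filter.Eventually.of_forall fun σ hσ => ?_)
    rw [Set.mem_univ_pi] at hσ
    exact Finset.prod_nonneg fun j _ => (zpow_pos (lt_trans ha (hσ j).1) _).le
  have step3 : ∫ σ in Set.pi Set.univ (fun _ : Fin (2*n+1) => Set.Ioo (1/R₂) R₁),
        ∏ j : Fin (2*n+1), (σ j) ^ (((2*n+1 : ℕ):ℤ) - 2*(j:ℤ) - 2)
      = ∏ j ∈ Finset.range (2*n+1), ∫ x in Set.Ioo (1/R₂) R₁, x ^ (eI n j) := by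
    rw [integral_box (fun j x => x ^ (((2*n+1 : ℕ):ℤ) - 2*((j:ℕ):ℤ) - 2))
      (fun _ => Set.Ioo (1/R₂) R₁) (fun _ => measurableSet_Ioo)]
    simp_rw [hexp]
    exact Fin.prod_univ_eq_prod_range (fun j => ∫ x in Set.Ioo (1/R₂) R₁, x ^ (eI n j)) (2*n+1)
  -- per-coordinate bounds
  have hJ0 : ∀ j : ℕ, 0 ≤ ∫ x in Set.Ioo (1/R₂) R₁, x ^ (eI n j) := fun j =>
    setIntegral_nonneg measurableSet_Ioo fun x hx => (zpow_pos (lt_trans ha hx.1) _).le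
  have hJA : ∀ j ∈ Finset.range n, (∫ x in Set.Ioo (1/R₂) R₁, x ^ (eI n j))
      ≤ R₁ ^ (eI n j + 1) := by
    intro j hj
    rw [Finset.mem_range] at hj
    have he : 0 ≤ eI n j := by unfold eI; omega
    calc (∫ x in Set.Ioo (1/R₂) R₁, x ^ (eI n j)) ≤ (R₁ - 1/R₂) * R₁ ^ (eI n j) :=
          setIntegral_Ioo_le _ haR.le (integrableOn_zpow_Ioo _ ha)
            (fun x hx => zpow_base_le _ (lt_trans ha hx.1) hx.2.le he)
      _ ≤ R₁ * R₁ ^ (eI n j) :=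
          mul_le_mul_of_nonneg_right (by linarith) (zpow_pos hR₁ _).le
      _ = R₁ ^ (eI n j + 1) := by rw [zpow_add_one₀ hR₁.ne', mul_comm]
  have hJn : (∫ x in Set.Ioo (1/R₂) R₁, x ^ (eI n n)) = Real.log (R₁ * R₂) := by
    have he : eI n n = -1 := by unfold eI; ring
    rw [he, integral_Ioo_inv ha haR.le]
    congr 1
    field_simp
  have hJC : ∀ i ∈ Finset.range n, (∫ x in Set.Ioo (1/R₂) R₁, x ^ (eI n (n+1+i)))
      ≤ R₂ ^ (-(eI n (n+1+i) + 1)) := by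
    intro i hi
    have he : eI n (n+1+i) ≤ -2 := by unfold eI; push_cast; omega
    calc (∫ x in Set.Ioo (1/R₂) R₁, x ^ (eI n (n+1+i)))
        ≤ (1/R₂) ^ (eI n (n+1+i) + 1) := integral_Ioo_zpow_le _ ha haR.le he
      _ = R₂ ^ (-(eI n (n+1+i) + 1)) := by rw [one_div, inv_zpow, ← zpow_neg]
  -- assemble
  have hMA : ∏ j ∈ Finset.range n, R₁ ^ (eI n j + 1) = R₁ ^ (n^2+n) := by
    rw [prod_zpow_sum R₁ hR₁.ne', sumEA, zpow_natCast]
  have hMC : ∏ i ∈ Finset.range n, R₂ ^ (-(eI n (n+1+i) + 1)) = R₂ ^ (n^2+n) := by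
    rw [prod_zpow_sum R₂ hR₂.ne', sumEC, zpow_natCast]
  have hsplit := prod_split (2*n+1) n (by omega)
    (fun j => ∫ x in Set.Ioo (1/R₂) R₁, x ^ (eI n j))
  have step4 : ∏ j ∈ Finset.range (2*n+1), (∫ x in Set.Ioo (1/R₂) R₁, x ^ (eI n j))
      ≤ R₁ ^ (n^2+n) * Real.log (R₁*R₂) * R₂ ^ (n^2+n) := by
    rw [hsplit, hJn]
    have h1 : ∏ j ∈ Finset.range n, (∫ x in Set.Ioo (1/R₂) R₁, x ^ (eI n j))
        ≤ R₁ ^ (n^2+n) := by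
      rw [← hMA]
      exact Finset.prod_le_prod (fun j _ => hJ0 j) hJA
    have h2 : ∏ i ∈ Finset.range n, (∫ x in Set.Ioo (1/R₂) R₁, x ^ (eI n (n+1+i)))
        ≤ R₂ ^ (n^2+n) := by
      rw [← hMC]
      exact Finset.prod_le_prod (fun i _ => hJ0 _) hJC
    have hlogpos : 0 < Real.log (R₁*R₂) := Real.log_pos hT1
    apply mul_le_mul
    · apply mul_le_mul h1 le_rfl hlogpos.le (by positivity)
    · exact h2
    · exact Finset.prod_nonneg fun i _ => hJ0 _
    · positivity
  calc volI (2*n+1) R₁ R₂ ≤ _ := step1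
    _ ≤ _ := step2
    _ = _ := step3
    _ ≤ R₁ ^ (n^2+n) * Real.log (R₁*R₂) * R₂ ^ (n^2+n) := step4
    _ = (R₁*R₂)^(n^2+n) * Real.log (R₁*R₂) := by rw [mul_pow]; ring

end core

noncomputable def kk (n : ℕ) : ℝ := ∏ j ∈ Finset.range (2*n+1), (3/4:ℝ)^(2*n+1-1-j)

noncomputable def ccA (n : ℕ) : ℝ := ∏ j ∈ Finset.range n, ((8:ℝ)^(j+1)) ^ (eI n j + 1)

noncomputable def ccC (n : ℕ) : ℝ :=
  ∏ i ∈ Finset.range n, ((2:ℝ)^(eI n (n+1+i)) * ((8:ℝ)^(n-i)) ^ (eI n (n+1+i) + 1))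

lemma kk_pos (n : ℕ) : 0 < kk n :=
  Finset.prod_pos fun j _ => pow_pos (by norm_num) _

lemma ccA_pos (n : ℕ) : 0 < ccA n :=
  Finset.prod_pos fun j _ => zpow_pos (pow8_pos _) _

lemma ccC_pos (n : ℕ) : 0 < ccC n :=
  Finset.prod_pos fun i _ => mul_pos (zpow_pos (by norm_num) _) (zpow_pos (pow8_pos _) _)

section lowerSec
variable {n : ℕ} {R₁ R₂ : ℝ}

lemma lower (hn1 : 1 ≤ n) (hR₁ : 0 < R₁) (hR₂ : 0 < R₂)
    (hT : (8:ℝ)^(2*(2*n+1)) ≤ R₁ * R₂) :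
    kk n * (ccC n / ccA n) * (1/2) * ((R₁*R₂)^(n^2+n) * Real.log (R₁*R₂))
      ≤ volI (2*n+1) R₁ R₂ := by
  have hT1 : (1:ℝ) < R₁ * R₂ :=
    lt_of_lt_of_le (one_lt_pow₀ (by norm_num) (by omega)) hT
  have ha : (0:ℝ) < 1/R₂ := by positivity
  have hlog : 0 < Real.log (R₁*R₂) := Real.log_pos hT1
  have hlopos : ∀ j, 0 < lo n R₁ R₂ j := lo_pos hR₁ hR₂
  have hhipos : ∀ j, 0 < hi n R₁ R₂ j := hi_pos hR₁ hR₂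
  have hlohi := lo_le_hi hn1 hR₁ hR₂ hT
  have hchain := chain (N := 2*n+1) (lo n R₁ R₂) (hi n R₁ R₂)
    (fun j _ => hhipos j) (fun j _ => hlohi j) (fun j hj => lo_adj hn1 hR₁ hR₂ hj)
  -- box is inside the region
  have hB'S : Set.pi Set.univ (fun j : Fin (2*n+1) =>
        Set.Ioo (lo n R₁ R₂ (j:ℕ)) (hi n R₁ R₂ (j:ℕ)))
      ⊆ {σ : Fin (2*n+1) → ℝ | (∀ i, 1 / R₂ < σ i ∧ σ i < R₁) ∧
        ∀ i j : Fin (2*n+1), i < j → σ j < σ i} := by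
    intro σ hσ
    rw [Set.mem_univ_pi] at hσ
    constructor
    · intro i
      exact ⟨lt_of_le_of_lt (lo_ge hn1 hR₁ hR₂ hT i.isLt) (hσ i).1,
        lt_of_lt_of_le (hσ i).2 (hi_le hn1 hR₁ hR₂ hT i.isLt)⟩
    · intro i j hij
      have h2 := hchain (i:ℕ) (j:ℕ) hij j.isLt
      have h3 := hhipos (j:ℕ)
      have h4 := (hσ j).2
      have h5 := (hσ i).1
      linarith
  have hgap : ∀ σ ∈ Set.pi Set.univ (fun j : Fin (2*n+1) =>
        Set.Ioo (lo n R₁ R₂ (j:ℕ)) (hi n R₁ R₂ (j:ℕ))),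
      ∀ i j : Fin (2*n+1), i < j → 2 * σ j ≤ σ i := by
    intro σ hσ i j hij
    rw [Set.mem_univ_pi] at hσ
    have h2 := hchain (i:ℕ) (j:ℕ) hij j.isLt
    have h4 := (hσ j).2
    have h5 := (hσ i).1
    linarith
  have hB'meas : MeasurableSet (Set.pi Set.univ (fun j : Fin (2*n+1) =>
      Set.Ioo (lo n R₁ R₂ (j:ℕ)) (hi n R₁ R₂ (j:ℕ)))) :=
    MeasurableSet.univ_pi fun _ => measurableSet_Ioo
  have hFS := fintS n hR₁ hR₂ hT1
  -- step A : ∫_{B'} H ≤ ∫_{B'} F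
  have stepA : ∫ σ in Set.pi Set.univ (fun j : Fin (2*n+1) =>
        Set.Ioo (lo n R₁ R₂ (j:ℕ)) (hi n R₁ R₂ (j:ℕ))),
        ∏ j : Fin (2*n+1), ((3/4:ℝ) ^ (2*n+1-1-(j:ℕ)) *
          (σ j) ^ (((2*n+1 : ℕ):ℤ) - 2*(j:ℤ) - 2))
      ≤ ∫ σ in Set.pi Set.univ (fun j : Fin (2*n+1) =>
        Set.Ioo (lo n R₁ R₂ (j:ℕ)) (hi n R₁ R₂ (j:ℕ))),
        (∏ l, ((σ l) ^ (2*n+1))⁻¹) * ∏ j, ∏ k ∈ Finset.Ioi j, ((σ j)^2 - (σ k)^2) := by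
    refine setIntegral_mono_on ?_ (hFS.mono_set hB'S) hB'meas ?_
    · exact integrableOn_box (fun j x => (3/4:ℝ) ^ (2*n+1-1-(j:ℕ)) *
          x ^ (((2*n+1 : ℕ):ℤ) - 2*((j:ℕ):ℤ) - 2))
        (fun j : Fin (2*n+1) => Set.Ioo (lo n R₁ R₂ (j:ℕ)) (hi n R₁ R₂ (j:ℕ)))
        (fun _ => measurableSet_Ioo)
        (fun j => ((integrableOn_zpow_Ioo _ (hlopos (j:ℕ))).const_mul _))
    · intro σ hσ
      have hpos : ∀ i, 0 < σ i := by
        intro i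
        have := hσ i (Set.mem_univ i)
        exact lt_trans (hlopos (i:ℕ)) this.1
      exact F_ge σ hpos (hgap σ hσ)
  -- step B : ∫_{B'} F ≤ volI
  have stepB : ∫ σ in Set.pi Set.univ (fun j : Fin (2*n+1) =>
        Set.Ioo (lo n R₁ R₂ (j:ℕ)) (hi n R₁ R₂ (j:ℕ))),
        (∏ l, ((σ l) ^ (2*n+1))⁻¹) * ∏ j, ∏ k ∈ Finset.Ioi j, ((σ j)^2 - (σ k)^2)
      ≤ volI (2*n+1) R₁ R₂ := by
    refine setIntegral_mono_set hFS ?_ (HasSubset.Subset.eventuallyLE hB'S)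
    refine (ae_restrict_iff' (measS (1/R₂) R₁)).2
      (Filter.Eventually.of_forall fun σ hσ => ?_)
    exact (F_nonneg_le σ (fun i => lt_trans ha (hσ.1 i).1) hσ.2).1
  -- step C : evaluate ∫_{B'} H as a product
  have stepC : ∫ σ in Set.pi Set.univ (fun j : Fin (2*n+1) =>
        Set.Ioo (lo n R₁ R₂ (j:ℕ)) (hi n R₁ R₂ (j:ℕ))),
        ∏ j : Fin (2*n+1), ((3/4:ℝ) ^ (2*n+1-1-(j:ℕ)) *
          (σ j) ^ (((2*n+1 : ℕ):ℤ) - 2*(j:ℤ) - 2))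
      = kk n * ∏ j ∈ Finset.range (2*n+1),
          ∫ x in Set.Ioo (lo n R₁ R₂ j) (hi n R₁ R₂ j), x ^ (eI n j) := by
    rw [integral_box (fun j x => (3/4:ℝ) ^ (2*n+1-1-(j:ℕ)) *
        x ^ (((2*n+1 : ℕ):ℤ) - 2*((j:ℕ):ℤ) - 2))
      (fun j : Fin (2*n+1) => Set.Ioo (lo n R₁ R₂ (j:ℕ)) (hi n R₁ R₂ (j:ℕ)))
      (fun _ => measurableSet_Ioo)]
    simp_rw [integral_const_mul, hexp]
    rw [Finset.prod_mul_distrib]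
    congr 1
    · exact Fin.prod_univ_eq_prod_range (fun j => (3/4:ℝ)^(2*n+1-1-j)) (2*n+1)
    · exact Fin.prod_univ_eq_prod_range
        (fun j => ∫ x in Set.Ioo (lo n R₁ R₂ j) (hi n R₁ R₂ j), x ^ (eI n j)) (2*n+1)
  -- per-coordinate lower bounds
  have hK0 : ∀ j : ℕ, 0 ≤ ∫ x in Set.Ioo (lo n R₁ R₂ j) (hi n R₁ R₂ j), x ^ (eI n j) :=
    fun j => setIntegral_nonneg measurableSet_Ioo
      fun x hx => (zpow_pos (lt_trans (hlopos j) hx.1) _).le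
  have hKA : ∀ j ∈ Finset.range n, (R₁ / 8^(j+1)) ^ (eI n j + 1)
      ≤ ∫ x in Set.Ioo (lo n R₁ R₂ j) (hi n R₁ R₂ j), x ^ (eI n j) := by
    intro j hj
    rw [Finset.mem_range] at hj
    have hl : lo n R₁ R₂ j = R₁ / 8^(j+1) := by unfold lo; rw [if_pos hj]
    have hu : hi n R₁ R₂ j = 2 * (R₁ / 8^(j+1)) := by unfold hi; rw [if_pos hj]
    have hLpos : (0:ℝ) < R₁ / 8^(j+1) := by positivity
    have he : 0 ≤ eI n j := by unfold eI; omega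
    rw [hl, hu]
    have hbnd := setIntegral_Ioo_ge (fun x => x ^ (eI n j))
      (by linarith : R₁ / 8^(j+1) ≤ 2 * (R₁ / 8^(j+1)))
      (integrableOn_zpow_Ioo _ hLpos)
      (fun x hx => zpow_base_le _ hLpos hx.1.le he)
    calc (R₁ / 8^(j+1)) ^ (eI n j + 1)
        = (2 * (R₁ / 8^(j+1)) - R₁ / 8^(j+1)) * (R₁ / 8^(j+1)) ^ (eI n j) := by
          rw [zpow_add_one₀ hLpos.ne', mul_comm ((R₁ / 8^(j+1)) ^ (eI n j)) _]
          congr 1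
          ring
      _ ≤ _ := hbnd
  have hKn : (1/2) * Real.log (R₁*R₂)
      ≤ ∫ x in Set.Ioo (lo n R₁ R₂ n) (hi n R₁ R₂ n), x ^ (eI n n) := by
    have hl : lo n R₁ R₂ n = 4 * 8^n / R₂ := by
      unfold lo; rw [if_neg (lt_irrefl n), if_pos rfl]
    have hu : hi n R₁ R₂ n = R₁ / (2 * 8^n) := by
      unfold hi; rw [if_neg (lt_irrefl n), if_pos rfl]
    have he : eI n n = -1 := by unfold eI; ring
    rw [hl, hu, he, integral_Ioo_inv (by positivity) (by rw [← hl, ← hu]; exact hlohi n)]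
    have hq : (R₁/(2*8^n)) / (4*8^n/R₂) = R₁*R₂ / 8^(2*n+1) := by
      rw [show 2*n+1 = n+n+1 by omega, pow_add, pow_add, pow_one]
      field_simp
      ring
    rw [hq, Real.log_div (by positivity) (by positivity)]
    have hlogle : Real.log ((8:ℝ)^(2*(2*n+1))) ≤ Real.log (R₁*R₂) :=
      Real.log_le_log (by positivity) hT
    rw [Real.log_pow] at hlogle
    rw [Real.log_pow]
    have h8 : 0 ≤ Real.log 8 := Real.log_nonneg (by norm_num)
    push_cast at hlogle ⊢
    linarith
  have hKC : ∀ i ∈ Finset.range n,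
      (2:ℝ)^(eI n (n+1+i)) * ((8^(n-i)/R₂) ^ (eI n (n+1+i) + 1))
      ≤ ∫ x in Set.Ioo (lo n R₁ R₂ (n+1+i)) (hi n R₁ R₂ (n+1+i)), x ^ (eI n (n+1+i)) := by
    intro i hi'
    rw [Finset.mem_range] at hi'
    have hl : lo n R₁ R₂ (n+1+i) = 8^(n-i) / R₂ := by
      unfold lo
      rw [if_neg (by omega), if_neg (by omega), show 2*n+1-(n+1+i) = n-i by omega]
    have hu : hi n R₁ R₂ (n+1+i) = 2 * (8^(n-i) / R₂) := by
      unfold hi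
      rw [if_neg (by omega), if_neg (by omega), show 2*n+1-(n+1+i) = n-i by omega]
    have hLpos : (0:ℝ) < 8^(n-i) / R₂ := by positivity
    have he : eI n (n+1+i) ≤ 0 := by unfold eI; push_cast; omega
    rw [hl, hu]
    have hbnd := setIntegral_Ioo_ge (fun x => x ^ (eI n (n+1+i)))
      (by linarith : 8^(n-i)/R₂ ≤ 2 * (8^(n-i)/R₂))
      (integrableOn_zpow_Ioo _ hLpos)
      (fun x hx => zpow_base_le_neg _ (lt_trans hLpos hx.1) hx.2.le he)
    calc (2:ℝ)^(eI n (n+1+i)) * ((8^(n-i)/R₂) ^ (eI n (n+1+i) + 1))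
        = (2 * (8^(n-i)/R₂) - 8^(n-i)/R₂) * (2 * (8^(n-i)/R₂)) ^ (eI n (n+1+i)) := by
          rw [mul_zpow, zpow_add_one₀ hLpos.ne']
          ring
      _ ≤ _ := hbnd
  -- product computations
  have hPA : ∏ j ∈ Finset.range n, (R₁ / 8^(j+1)) ^ (eI n j + 1)
      = R₁ ^ (n^2+n) / ccA n := by
    calc ∏ j ∈ Finset.range n, (R₁ / 8^(j+1)) ^ (eI n j + 1)
        = ∏ j ∈ Finset.range n, (R₁ ^ (eI n j + 1) / ((8:ℝ)^(j+1)) ^ (eI n j + 1)) := by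
          refine Finset.prod_congr rfl fun j _ => ?_
          rw [div_zpow]
      _ = (∏ j ∈ Finset.range n, R₁ ^ (eI n j + 1)) / ccA n := Finset.prod_div_distrib _ _
      _ = R₁ ^ (n^2+n) / ccA n := by rw [prod_zpow_sum R₁ hR₁.ne', sumEA, zpow_natCast]
  have hPC : ∏ i ∈ Finset.range n,
      ((2:ℝ)^(eI n (n+1+i)) * ((8^(n-i)/R₂) ^ (eI n (n+1+i) + 1)))
      = ccC n * R₂ ^ (n^2+n) := by
    calc ∏ i ∈ Finset.range n, ((2:ℝ)^(eI n (n+1+i)) * ((8^(n-i)/R₂) ^ (eI n (n+1+i) + 1)))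
        = ∏ i ∈ Finset.range n, (((2:ℝ)^(eI n (n+1+i)) * ((8:ℝ)^(n-i)) ^ (eI n (n+1+i) + 1))
            * R₂ ^ (-(eI n (n+1+i) + 1))) := by
          refine Finset.prod_congr rfl fun i _ => ?_
          rw [div_zpow, zpow_neg]
          ring
      _ = ccC n * ∏ i ∈ Finset.range n, R₂ ^ (-(eI n (n+1+i) + 1)) :=
          Finset.prod_mul_distrib
      _ = ccC n * R₂ ^ (n^2+n) := by rw [prod_zpow_sum R₂ hR₂.ne', sumEC, zpow_natCast]
  -- combine the three chunks
  have hKprod : (R₁ ^ (n^2+n) / ccA n) * ((1/2) * Real.log (R₁*R₂)) * (ccC n * R₂ ^ (n^2+n))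
      ≤ ∏ j ∈ Finset.range (2*n+1),
          ∫ x in Set.Ioo (lo n R₁ R₂ j) (hi n R₁ R₂ j), x ^ (eI n j) := by
    rw [prod_split (2*n+1) n (by omega)]
    have hA : R₁ ^ (n^2+n) / ccA n
        ≤ ∏ j ∈ Finset.range n, ∫ x in Set.Ioo (lo n R₁ R₂ j) (hi n R₁ R₂ j), x ^ (eI n j) := by
      rw [← hPA]
      exact Finset.prod_le_prod (fun j _ => (zpow_pos (by positivity) _).le) hKA
    have hC : ccC n * R₂ ^ (n^2+n)
        ≤ ∏ i ∈ Finset.range n,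
            ∫ x in Set.Ioo (lo n R₁ R₂ (n+1+i)) (hi n R₁ R₂ (n+1+i)), x ^ (eI n (n+1+i)) := by
      rw [← hPC]
      exact Finset.prod_le_prod
        (fun i _ => mul_nonneg (zpow_pos (by norm_num) _).le (zpow_pos (by positivity) _).le)
        hKC
    have h1 : 0 ≤ R₁ ^ (n^2+n) / ccA n := div_nonneg (pow_nonneg hR₁.le _) (ccA_pos n).le
    have h2 : 0 ≤ (1/2) * Real.log (R₁*R₂) := mul_nonneg (by norm_num) hlog.le
    have h3 : 0 ≤ ccC n * R₂ ^ (n^2+n) := mul_nonneg (ccC_pos n).le (pow_nonneg hR₂.le _)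
    have hKA0 : 0 ≤ ∏ j ∈ Finset.range n,
        ∫ x in Set.Ioo (lo n R₁ R₂ j) (hi n R₁ R₂ j), x ^ (eI n j) :=
      Finset.prod_nonneg fun j _ => hK0 j
    exact mul_le_mul (mul_le_mul hA hKn h2 hKA0) hC h3 (mul_nonneg hKA0 (hK0 n))
  calc kk n * (ccC n / ccA n) * (1/2) * ((R₁*R₂)^(n^2+n) * Real.log (R₁*R₂))
      = kk n * ((R₁ ^ (n^2+n) / ccA n) * ((1/2) * Real.log (R₁*R₂))
          * (ccC n * R₂ ^ (n^2+n))) := by rw [mul_pow]; ring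
    _ ≤ kk n * ∏ j ∈ Finset.range (2*n+1),
          ∫ x in Set.Ioo (lo n R₁ R₂ j) (hi n R₁ R₂ j), x ^ (eI n j) :=
        mul_le_mul_of_nonneg_left hKprod (kk_pos n).le
    _ = _ := stepC.symm
    _ ≤ _ := stepA
    _ ≤ volI (2*n+1) R₁ R₂ := stepB
end lowerSec

theorem stmt0 (N : ℕ) (hN : 3 ≤ N) (hodd : Odd N) :
    ∃ C₁ C₂ T : ℝ, 0 < C₁ ∧ 0 < C₂ ∧ 1 < T ∧
      ∀ R₁ R₂ : ℝ, 0 < R₁ → 0 < R₂ → T ≤ R₁ * R₂ →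
        C₁ ≤ volI N R₁ R₂ /
            ((R₁ * R₂) ^ (((N : ℝ) ^ 2 - 1) / 4) * Real.log (R₁ * R₂)) ∧
        volI N R₁ R₂ /
            ((R₁ * R₂) ^ (((N : ℝ) ^ 2 - 1) / 4) * Real.log (R₁ * R₂)) ≤ C₂ := by
  obtain ⟨m, hm⟩ := hodd
  have h2 : N = 2*m+1 := by omega
  subst h2
  clear hm
  have hn1 : 1 ≤ m := by omega
  refine ⟨kk m * (ccC m / ccA m) * (1/2), 1, (8:ℝ)^(2*(2*m+1)), ?_, one_pos, ?_, ?_⟩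
  · have h1 := kk_pos m
    have h2 := ccA_pos m
    have h3 := ccC_pos m
    positivity
  · exact one_lt_pow₀ (by norm_num) (by omega)
  · intro R₁ R₂ hR₁ hR₂ hT
    have hT1 : (1:ℝ) < R₁ * R₂ :=
      lt_of_lt_of_le (one_lt_pow₀ (by norm_num) (by omega)) hT
    have hlog : 0 < Real.log (R₁*R₂) := Real.log_pos hT1
    have hexp2 : (((2*m+1 : ℕ):ℝ)^2 - 1)/4 = ((m^2+m : ℕ):ℝ) := by push_cast; ring
    have hD : (R₁*R₂) ^ ((((2*m+1 : ℕ):ℝ)^2 - 1)/4) = (R₁*R₂)^(m^2+m) := by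
      rw [hexp2, Real.rpow_natCast]
    rw [hD]
    have hDpos : 0 < (R₁*R₂)^(m^2+m) * Real.log (R₁*R₂) :=
      mul_pos (pow_pos (by positivity) _) hlog
    constructor
    · rw [le_div_iff₀ hDpos]
      exact lower hn1 hR₁ hR₂ hT
    · rw [div_le_one hDpos]
      exact upper hn1 hR₁ hR₂ hT
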